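/- Let (V, Ω) be a symplectic vector space of dimension 2n (n ≥ 1), let r be a symmetric bilinear form on V, and let ρ ∈ End(V) be defined by Ω(X, ρY) = r(X,Y). Define E(X,Y)Z = (1/(2n+2))(2Ω(X,Y)ρZ + Ω(X,Z)ρY − Ω(Y,Z)ρX + Ω(X,ρZ)Y − Ω(Y,ρZ)X). Then E is an algebraic symplectic curvature tensor: E(X,Y) = −E(Y,X), Ω(E(X,Y)Z, T) = Ω(E(X,Y)T, Z) (i.e. each E(X,Y) ∈ sp(V,Ω)), and E(X,Y)Z + E(Y,Z)X + E(Z,X)Y = 0 for all X, Y, Z, T ∈ V. -/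
import Mathlib


/-- the Ricci-type tensor
`E(X,Y)Z = (1/(2n+2))(2Ω(X,Y)ρZ + Ω(X,Z)ρY − Ω(Y,Z)ρX + Ω(X,ρZ)Y − Ω(Y,ρZ)X)`
built from a symmetric bilinear form `r` (with `Ω(X,ρY) = r(X,Y)`) is an algebraic
symplectic curvature tensor. -/
theorem ricci_type_tensor_is_curvature_tensor
    {V : Type*} [AddCommGroup V] [Module ℝ V] [FiniteDimensional ℝ V]
    (n : ℕ) (hn : 1 ≤ n) (hdim : Module.finrank ℝ V = 2 * n)
    (Ω : V →ₗ[ℝ] V →ₗ[ℝ] ℝ)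
    (hΩalt : ∀ v : V, Ω v v = 0)
    (hΩnd : ∀ u : V, (∀ v : V, Ω u v = 0) → u = 0)
    (r : V →ₗ[ℝ] V →ₗ[ℝ] ℝ) (hr : ∀ X Y : V, r X Y = r Y X)
    (ρ : V →ₗ[ℝ] V) (hρ : ∀ X Y : V, Ω X (ρ Y) = r X Y)
    (E : V → V → V → V)
    (hE : ∀ X Y Z : V, E X Y Z =
      (2 * (n : ℝ) + 2)⁻¹ •
        ((2 * Ω X Y) • ρ Z + (Ω X Z) • ρ Y - (Ω Y Z) • ρ X
          + (Ω X (ρ Z)) • Y - (Ω Y (ρ Z)) • X)) :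
    (∀ X Y Z : V, E X Y Z = - E Y X Z) ∧
    (∀ X Y Z T : V, Ω (E X Y Z) T = Ω (E X Y T) Z) ∧
    (∀ X Y Z : V, E X Y Z + E Y Z X + E Z X Y = 0) := by
  have skew : ∀ u v : V, Ω u v = -Ω v u := by
    intro u v
    have h := hΩalt (u + v)
    simp only [map_add, LinearMap.add_apply, hΩalt] at h
    linarith
  have sym : ∀ u v : V, Ω u (ρ v) = Ω v (ρ u) := by
    intro u v; rw [hρ, hρ, hr]
  refine ⟨?_, ?_, ?_⟩
  · intro X Y Z
    rw [hE, hE, skew Y X, sym Y Z]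
    module
  · intro X Y Z T
    simp only [hE, map_smul, map_add, map_sub, LinearMap.add_apply, LinearMap.sub_apply,
      LinearMap.smul_apply, smul_eq_mul]
    rw [skew (ρ Z) T, skew (ρ Y) T, skew (ρ X) T, skew (ρ T) Z, skew (ρ Y) Z, skew (ρ X) Z,
      sym T X, sym T Y, sym T Z, sym Z X, sym Z Y]
    ring
  · intro X Y Z
    rw [hE X Y Z, hE Y Z X, hE Z X Y, skew Y X, skew Z X, skew Z Y,
      sym Y Z, sym Z X, sym X Y]
    module
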